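/- For 0 < μ < L, setting α = 4μ²/L² and q = (1/2)(2 + α − √(α² + 4α)), it holds that ln(q) ≥ −2μ/(L − μ). -/

import Mathlib

theorem log_q_lower_bound (L μ : ℝ) (hμ : 0 < μ) (hL : μ < L)
    (α q : ℝ) (hα : α = 4 * μ ^ 2 / L ^ 2)
    (hq : q = (2 + α - Real.sqrt (α ^ 2 + 4 * α)) / 2) :
    Real.log q ≥ -2 * μ / (L - μ) := by
  have hL0 : 0 < L := hμ.trans hL
  have hLne : (L:ℝ) ≠ 0 := ne_of_gt hL0
  have hLμ : (0:ℝ) < L - μ := sub_pos.mpr hL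
  set s := Real.sqrt (L ^ 2 + μ ^ 2) with hs
  have hs2 : s ^ 2 = L ^ 2 + μ ^ 2 := Real.sq_sqrt (by positivity)
  have hs0 : 0 < s := Real.sqrt_pos.mpr (by positivity)
  have hsμ : μ < s := by nlinarith [sq_nonneg (s - μ), sq_nonneg (s + μ)]
  -- compute the sqrt term
  have hsqrt : Real.sqrt (α ^ 2 + 4 * α) = 4 * μ * s / L ^ 2 := by
    have h : α ^ 2 + 4 * α = (4 * μ * s / L ^ 2) ^ 2 := by
      rw [hα]
      field_simp
      linear_combination (-1 : ℝ) * hs2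
    rw [h, Real.sqrt_sq (by positivity)]
  have hqval : q = ((s - μ) / L) ^ 2 := by
    rw [hq, hsqrt, hα]
    field_simp
    ring_nf
    nlinarith [hs2]
  have hq0 : 0 < q := by
    rw [hqval]
    exact pow_pos (div_pos (by linarith) hL0) 2
  -- key inequality
  have ha : 0 < s * (L + μ) := by positivity
  have hb : 0 < L ^ 2 + L * μ + μ ^ 2 := by positivity
  have ha2 : (s * (L + μ)) ^ 2 = (L ^ 2 + μ ^ 2) * (L + μ) ^ 2 := by
    rw [mul_pow, hs2]
  have hkey : s * (L + μ) ≤ L ^ 2 + L * μ + μ ^ 2 := by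
    nlinarith [ha, hb, ha2, sq_nonneg (L * μ)]
  have hqge : (L - μ) / (L + μ) ≤ q := by
    rw [hqval, div_pow, div_le_div_iff₀ (by positivity) (by positivity)]
    nlinarith [hs2, mul_nonneg hμ.le (sub_nonneg.mpr hkey)]
  -- log q ≥ 1 - 1/q
  have hlog : Real.log q ≥ 1 - 1 / q := by
    have h1 : Real.log (1 / q) ≤ 1 / q - 1 :=
      Real.log_le_sub_one_of_pos (by positivity)
    rw [Real.log_div one_ne_zero (ne_of_gt hq0), Real.log_one] at h1
    linarith
  have h1q : 1 / q ≤ (L + μ) / (L - μ) := by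
    rw [div_le_div_iff₀ hq0 hLμ]
    have h' : L - μ ≤ q * (L + μ) := (div_le_iff₀ (by positivity)).mp hqge
    nlinarith [h']
  have hid : 1 - (L + μ) / (L - μ) = -2 * μ / (L - μ) := by
    field_simp
    ring
  linarith [hlog, h1q, hid.ge, hid.le]
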